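/- Let C₂ = ℤ/2ℤ. Let f : C₂ × ℤ → C₂ × (ℤ * C₂) be the homomorphism that is the identity on the factor C₂ and sends the generator 1 of ℤ to the generator of the free factor ℤ of ℤ * C₂. Then the pushout in the category of groups of two copies of f (i.e., the amalgamated free product (C₂ × (ℤ * C₂)) *_{C₂ × ℤ} (C₂ × (ℤ * C₂)) with both amalgamating maps equal to f) is isomorphic to C₂ × (ℤ * C₂ * C₂). -/

import Mathlib

/-- The cyclic group of order two, written multiplicatively. -/
abbrev C2 : Type := Multiplicative (ZMod 2)

/-- The infinite cyclic group, written multiplicatively. -/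
abbrev Z : Type := Multiplicative ℤ

/-- The two-element family of types with value `B` at `false` and `D` at `true`. -/
def pairFam (B D : Type) : Bool → Type
  | false => B
  | true => D

instance pairFamGroup (B D : Type) [Group B] [Group D] : ∀ b, Group (pairFam B D b)
  | false => inferInstanceAs (Group B)
  | true => inferInstanceAs (Group D)

/-- The pair of homomorphisms `i : C →* B` and `j : C →* D`, as a family indexed by `Bool`;
the group pushout of `i` and `j` (the amalgamated free product `B *_C D`) is
`Monoid.PushoutI (pairHom i j)`. -/
def pairHom {C B D : Type} [Group C] [Group B] [Group D]
    (i : C →* B) (j : C →* D) : ∀ b, C →* pairFam B D b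
  | false => i
  | true => j

/-- The homomorphism `C₂ × ℤ → C₂ × (ℤ * C₂)` which is the identity on the factor `C₂`
and sends the generator `1` of `ℤ` to the generator of the free factor `ℤ` of `ℤ * C₂`. -/
def f : C2 × Z →* C2 × Monoid.Coprod Z C2 :=
  (MonoidHom.id C2).prodMap Monoid.Coprod.inl

open Monoid

theorem myProdExt {M N P : Type*} [MulOneClass M] [MulOneClass N] [MulOneClass P]
    {F G : M × N →* P} (h1 : F.comp (MonoidHom.inl M N) = G.comp (MonoidHom.inl M N))
    (h2 : F.comp (MonoidHom.inr M N) = G.comp (MonoidHom.inr M N)) : F = G := by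
  refine MonoidHom.ext fun ⟨a, b⟩ => ?_
  have : ((a, b) : M × N) = (a, 1) * ((1 : M), b) := by simp
  rw [this, map_mul, map_mul]
  have e1 := DFunLike.congr_fun h1 a
  have e2 := DFunLike.congr_fun h2 b
  simp only [MonoidHom.comp_apply, MonoidHom.inl_apply, MonoidHom.inr_apply] at e1 e2
  rw [e1, e2]

abbrev T : Type := C2 × Coprod (Coprod Z C2) C2

def fhoms : ∀ b, pairFam (C2 × Coprod Z C2) (C2 × Coprod Z C2) b →* T
  | false => (MonoidHom.id C2).prodMap Coprod.inl
  | true => (MonoidHom.id C2).prodMap (Coprod.lift (P := Coprod (Coprod Z C2) C2) ((Coprod.inl : Coprod Z C2 →* Coprod (Coprod Z C2) C2).comp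
      (Coprod.inl : Z →* Coprod Z C2)) Coprod.inr)

def F : PushoutI (pairHom f f) →* T :=
  PushoutI.lift (φ := pairHom f f) (K := T) fhoms ((MonoidHom.id C2).prodMap (Coprod.inl.comp Coprod.inl))
    (by rintro (_ | _) <;> rfl)

/-- `PushoutI.of` with the type of each summand unfolded. -/
def ofP : ∀ b : Bool, C2 × Coprod Z C2 →* PushoutI (pairHom f f)
  | false => PushoutI.of (φ := pairHom f f) false
  | true => PushoutI.of (φ := pairHom f f) true

theorem ofP_f_eq_base (b : Bool) (x : C2 × Z) :
    ofP b (f x) = PushoutI.base (pairHom f f) x := by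
  cases b
  · exact PushoutI.of_apply_eq_base (pairHom f f) false x
  · exact PushoutI.of_apply_eq_base (pairHom f f) true x

def h1 : C2 →* PushoutI (pairHom f f) :=
  (PushoutI.base (pairHom f f)).comp (MonoidHom.inl C2 Z)

def hC2 (b : Bool) : C2 →* PushoutI (pairHom f f) :=
  ((ofP b).comp (MonoidHom.inr C2 (Coprod Z C2))).comp Coprod.inr

def hZ : Z →* PushoutI (pairHom f f) :=
  ((ofP false).comp (MonoidHom.inr C2 (Coprod Z C2))).comp Coprod.inl

def h2 : Coprod (Coprod Z C2) C2 →* PushoutI (pairHom f f) :=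
  Coprod.lift (Coprod.lift hZ (hC2 false)) (hC2 true)

theorem central_comm (a : C2) (w : C2 × Coprod Z C2) :
    Commute ((a, 1) : C2 × Coprod Z C2) w := by
  show _ * _ = _ * _
  refine Prod.ext ?_ ?_
  · exact mul_comm _ _
  · simp

theorem base_eq' (b : Bool) (a : C2) : h1 a = ofP b ((a, 1) : C2 × Coprod Z C2) := by
  have : ((a, 1) : C2 × Coprod Z C2) = f ((a, 1) : C2 × Z) := by simp [f]
  rw [this, ofP_f_eq_base]; rfl

theorem h1_comm (a : C2) (x : PushoutI (pairHom f f)) : Commute (h1 a) x := by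
  induction x using PushoutI.induction_on with
  | of i g =>
    rw [base_eq' i a]
    cases i
    · exact Commute.map (central_comm a g) (PushoutI.of (φ := pairHom f f) false)
    · exact Commute.map (central_comm a g) (PushoutI.of (φ := pairHom f f) true)
  | base h =>
    exact Commute.map (Commute.all ((a, 1) : C2 × Z) h) (PushoutI.base (pairHom f f))
  | mul x y hx hy => exact hx.mul_right hy

def G : T →* PushoutI (pairHom f f) :=
  h1.noncommCoprod h2 (fun a w => h1_comm a (h2 w))

theorem G_comp_fhoms_false : G.comp (fhoms false) = ofP false := by
  refine myProdExt ?_ ?_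
  · refine MonoidHom.ext fun a => ?_
    show G (fhoms false (a, 1)) = ofP false (a, 1)
    have : fhoms false ((a, 1) : C2 × Coprod Z C2) = ((a, 1) : T) := by
      refine Prod.ext rfl ?_
      show Coprod.inl (1 : Coprod Z C2) = 1
      exact map_one _
    rw [this]
    show h1 a * h2 1 = _
    rw [map_one, mul_one]
    exact base_eq' false a
  · refine Coprod.hom_ext ?_ ?_
    · refine MonoidHom.ext fun z => ?_
      show G (fhoms false ((1, Coprod.inl z) : C2 × Coprod Z C2)) = ofP false (1, Coprod.inl z)
      have : fhoms false ((1, Coprod.inl z) : C2 × Coprod Z C2)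
          = ((1, Coprod.inl (Coprod.inl z)) : T) := Prod.ext rfl rfl
      rw [this]
      show h1 1 * h2 (Coprod.inl (Coprod.inl z)) = _
      rw [map_one, one_mul]
      rfl
    · refine MonoidHom.ext fun c => ?_
      show G (fhoms false ((1, Coprod.inr c) : C2 × Coprod Z C2)) = ofP false (1, Coprod.inr c)
      have : fhoms false ((1, Coprod.inr c) : C2 × Coprod Z C2)
          = ((1, Coprod.inl (Coprod.inr c)) : T) := Prod.ext rfl rfl
      rw [this]
      show h1 1 * h2 (Coprod.inl (Coprod.inr c)) = _
      rw [map_one, one_mul]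
      rfl

theorem G_comp_fhoms_true : G.comp (fhoms true) = ofP true := by
  refine myProdExt ?_ ?_
  · refine MonoidHom.ext fun a => ?_
    show G (fhoms true (a, 1)) = ofP true (a, 1)
    have : fhoms true ((a, 1) : C2 × Coprod Z C2) = ((a, 1) : T) := by
      refine Prod.ext rfl ?_
      show (Coprod.lift ((Coprod.inl : Coprod Z C2 →* Coprod (Coprod Z C2) C2).comp
        (Coprod.inl : Z →* Coprod Z C2)) Coprod.inr) (1 : Coprod Z C2) = 1
      exact map_one _
    rw [this]
    show h1 a * h2 1 = _
    rw [map_one, mul_one]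
    exact base_eq' true a
  · refine Coprod.hom_ext ?_ ?_
    · refine MonoidHom.ext fun z => ?_
      show G (fhoms true ((1, Coprod.inl z) : C2 × Coprod Z C2)) = ofP true (1, Coprod.inl z)
      have hf : ((1, Coprod.inl z) : C2 × Coprod Z C2) = f ((1, z) : C2 × Z) := by
        simp [f, Prod.ext_iff]
      have : fhoms true ((1, Coprod.inl z) : C2 × Coprod Z C2)
          = ((1, Coprod.inl (Coprod.inl z)) : T) := Prod.ext rfl rfl
      rw [this]
      show h1 1 * h2 (Coprod.inl (Coprod.inl z)) = _
      rw [map_one, one_mul]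
      show hZ z = _
      show ofP false (1, Coprod.inl z) = _
      rw [hf, ofP_f_eq_base, ofP_f_eq_base]
    · refine MonoidHom.ext fun c => ?_
      show G (fhoms true ((1, Coprod.inr c) : C2 × Coprod Z C2)) = ofP true (1, Coprod.inr c)
      have : fhoms true ((1, Coprod.inr c) : C2 × Coprod Z C2)
          = ((1, Coprod.inr c) : T) := Prod.ext rfl rfl
      rw [this]
      show h1 1 * h2 (Coprod.inr c) = _
      rw [map_one, one_mul]
      rfl

/-- The pushout of two copies of `f`, i.e. the amalgamated free product
`(C₂ × (ℤ * C₂)) *_{C₂ × ℤ} (C₂ × (ℤ * C₂))` with both amalgamating maps `f`,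
is isomorphic to `C₂ × (ℤ * C₂ * C₂)`. -/
theorem stmt6 :
    Nonempty
      (Monoid.PushoutI (pairHom f f) ≃*
        C2 × Monoid.Coprod (Monoid.Coprod Z C2) C2) := by
  refine ⟨MonoidHom.toMulEquiv F G ?_ ?_⟩
  · -- G.comp F = id
    refine PushoutI.hom_ext (fun i => ?_) ?_
    · have lhs : (G.comp F).comp (PushoutI.of (φ := pairHom f f) i) = G.comp (fhoms i) := by
        refine MonoidHom.ext fun x => ?_
        simp [F]
      rw [lhs, MonoidHom.id_comp]
      cases i
      · exact G_comp_fhoms_false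
      · exact G_comp_fhoms_true
    · rw [MonoidHom.id_comp]
      refine MonoidHom.ext fun x => ?_
      simp only [MonoidHom.comp_apply]
      have : F (PushoutI.base (pairHom f f) x)
          = ((x.1, Coprod.inl (Coprod.inl x.2)) : T) := by
        simp [F, Prod.ext_iff]
      rw [this]
      show h1 x.1 * h2 (Coprod.inl (Coprod.inl x.2)) = _
      show h1 x.1 * hZ x.2 = _
      show PushoutI.base (pairHom f f) (x.1, 1) * ofP false (1, Coprod.inl x.2) = _
      have hf : ((1, Coprod.inl x.2) : C2 × Coprod Z C2) = f ((1, x.2) : C2 × Z) := by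
        simp [f, Prod.ext_iff]
      rw [hf, ofP_f_eq_base, ← map_mul]
      congr 1
      simp
  · -- F.comp G = id
    apply myProdExt
    · refine MonoidHom.ext fun a => ?_
      show F (h1 a * h2 1) = _
      rw [map_one, mul_one]
      show F (PushoutI.base (pairHom f f) (a, 1)) = _
      simp [F, Prod.ext_iff]
    · have lhs : (F.comp G).comp (MonoidHom.inr C2 (Coprod (Coprod Z C2) C2)) = F.comp h2 := by
        refine MonoidHom.ext fun w => ?_
        show F (h1 1 * h2 w) = F (h2 w)
        rw [map_one, one_mul]
      rw [lhs, MonoidHom.id_comp]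
      refine Coprod.hom_ext (Coprod.hom_ext ?_ ?_) ?_
      · refine MonoidHom.ext fun z => ?_
        show F (hZ z) = MonoidHom.inr C2 _ (Coprod.inl (Coprod.inl z))
        show F (PushoutI.of (φ := pairHom f f) false (1, Coprod.inl z)) = _
        simp only [F, PushoutI.lift_of]
        exact Prod.ext rfl rfl
      · refine MonoidHom.ext fun c => ?_
        show F (hC2 false c) = MonoidHom.inr C2 _ (Coprod.inl (Coprod.inr c))
        show F (PushoutI.of (φ := pairHom f f) false (1, Coprod.inr c)) = _
        simp only [F, PushoutI.lift_of]
        exact Prod.ext rfl rfl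
      · refine MonoidHom.ext fun c => ?_
        show F (hC2 true c) = MonoidHom.inr C2 _ (Coprod.inr c)
        show F (PushoutI.of (φ := pairHom f f) true (1, Coprod.inr c)) = _
        simp only [F, PushoutI.lift_of]
        exact Prod.ext rfl rfl
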